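/- If any one of the multirelations R, S, T over X is a subidentity (a subset of 1_σ), then sequential composition is associative on them: (R · S) · T = R · (S · T). -/
import Mathlib


open Set

/-- Sequential composition of multirelations (Peleg). -/
def mseq {X : Type*} (R S : Set (X × Set X)) : Set (X × Set X) :=
  {p | ∃ B, (p.1, B) ∈ R ∧ ∃ f : X → Set X, (∀ b ∈ B, (b, f b) ∈ S) ∧ p.2 = ⋃ b ∈ B, f b}

/-- The unit of sequential composition. -/
def sunit (X : Type*) : Set (X × Set X) := {p | p.2 = {p.1}}

/-- Parallel (concurrent) composition of multirelations. -/
def mpar {X : Type*} (R S : Set (X × Set X)) : Set (X × Set X) :=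
  {p | ∃ A B, (p.1, A) ∈ R ∧ (p.1, B) ∈ S ∧ p.2 = A ∪ B}

/-- The unit of parallel composition. -/
def punit (X : Type*) : Set (X × Set X) := {p | p.2 = (∅ : Set X)}

/-- Domain of a multirelation. -/
def mdom {X : Type*} (R : Set (X × Set X)) : Set (X × Set X) :=
  {p | p.2 = {p.1} ∧ ∃ A, (p.1, A) ∈ R}

/-- Antidomain of a multirelation. -/
def mantidom {X : Type*} (R : Set (X × Set X)) : Set (X × Set X) :=
  {p | p.2 = {p.1} ∧ ¬ ∃ A, (p.1, A) ∈ R}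

/-- Diamond operator. -/
def mdia {X : Type*} (R P : Set (X × Set X)) : Set (X × Set X) := mdom (mseq R P)


lemma mseq_assoc_sub {X : Type*} (R S T : Set (X × Set X)) :
    mseq (mseq R S) T ⊆ mseq R (mseq S T) := by
  rintro ⟨a, A⟩ ⟨C, ⟨B, hB, f, hf, hC⟩, g, hg, hA⟩
  dsimp only at hB hC hA
  refine ⟨B, hB, fun b => ⋃ c ∈ f b, g c, fun b hb => ⟨f b, hf b hb, g, fun c hc => ?_, rfl⟩, ?_⟩
  · refine hg c ?_
    rw [hC]
    exact mem_biUnion hb hc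
  · show A = _
    rw [hA, hC]
    ext x
    simp only [mem_iUnion]
    tauto

theorem stmt8 {X : Type*} (R S T : Set (X × Set X))
    (h : R ⊆ sunit X ∨ S ⊆ sunit X ∨ T ⊆ sunit X) :
    mseq (mseq R S) T = mseq R (mseq S T) := by
  apply Subset.antisymm (mseq_assoc_sub R S T)
  rintro ⟨a, A⟩ ⟨B, hB, hfun, hh, hA⟩
  dsimp only at hB hA hh
  choose! C hC g hg hhb using hh
  dsimp only at hC hg hhb
  rcases h with h | h | h
  · -- R ⊆ sunit
    have hBa : B = {a} := h hB
    subst hBa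
    have ha : a ∈ ({a} : Set X) := rfl
    refine ⟨C a, ⟨{a}, hB, C, fun b hb => ?_, ?_⟩, g a, fun c hc => hg a ha c hc, ?_⟩
    · rw [mem_singleton_iff] at hb; rw [hb]; exact hC a ha
    · simp
    · show A = _
      rw [hA]
      simp [hhb a ha]
  · -- S ⊆ sunit
    have hCb : ∀ b ∈ B, C b = {b} := fun b hb => h (hC b hb)
    refine ⟨B, ⟨B, hB, fun b => {b}, fun b hb => ?_, by simp⟩,
      fun c => g c c, fun c hc => hg c hc c (by rw [hCb c hc]; rfl), ?_⟩
    · show (b, {b}) ∈ S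
      rw [← hCb b hb]; exact hC b hb
    · show A = _
      rw [hA]
      refine iUnion₂_congr fun b hb => ?_
      rw [hhb b hb, hCb b hb]
      simp
  · -- T ⊆ sunit
    have hgc : ∀ b ∈ B, ∀ c ∈ C b, g b c = {c} := fun b hb c hc => h (hg b hb c hc)
    have hhC : ∀ b ∈ B, hfun b = C b := by
      intro b hb
      rw [hhb b hb]
      ext x
      simp only [mem_iUnion]
      constructor
      · rintro ⟨c, hc, hx⟩
        rw [hgc b hb c hc] at hx
        rwa [mem_singleton_iff.mp hx]
      · exact fun hx => ⟨x, hx, by rw [hgc b hb x hx]; rfl⟩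
    refine ⟨⋃ b ∈ B, C b, ⟨B, hB, C, fun b hb => hC b hb, rfl⟩,
      fun c => {c}, ?_, ?_⟩
    · intro c hc
      simp only [mem_iUnion] at hc
      obtain ⟨b, hb, hcb⟩ := hc
      show (c, ({c} : Set X)) ∈ T
      rw [← hgc b hb c hcb]
      exact hg b hb c hcb
    · show A = _
      rw [hA]
      ext x
      simp only [mem_iUnion, mem_singleton_iff]
      constructor
      · rintro ⟨b, hb, hx⟩
        rw [hhC b hb] at hx
        exact ⟨x, ⟨b, hb, hx⟩, rfl⟩
      · rintro ⟨c, ⟨b, hb, hc⟩, hx⟩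
        subst hx
        exact ⟨b, hb, by rw [hhC b hb]; exact hc⟩
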